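/- Let γ > 1, δ ∈ (0, 1/2), and A ∈ ℝ. There exist ε₀ > 0 and C > 0 depending only on (γ, δ) such that the following holds for every 0 < ε ≤ ε₀ and every T > 1. Suppose p, q, s : [1, T] → ℝ are continuous with |p(t) − 1/t| ≤ ε·ln t / t², |q(t)| ≤ ε / t^{3−δ}, |s(t)| ≤ ε / t^{2−δ} for all t ∈ [1,T], and suppose y, k : [1, T] → ℝ are C¹ functions with y(1) = A, k(1) = 0, satisfying y'(t) = −p(t)·y(t) + q(t)·k(t) and k'(t) = −((γ+1)/2)·y(t) + s(t)·k(t) on [1,T]. Then for all t ∈ [1, T]: |y(t) − A/t| ≤ C·ε·|A|/t and |k(t) + ((γ+1)/2)·A·ln t| ≤ C·ε·|A|·ln t. -/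

import Mathlib

noncomputable section

open Real Set MeasureTheory intervalIntegral

namespace PBOS


lemma ftc2_icc {T : ℝ} {f : ℝ → ℝ} (hf : ContinuousOn f (Icc 1 T))
    {t : ℝ} (ht : t ∈ Icc (1:ℝ) T) :
    HasDerivWithinAt (fun u => ∫ x in (1:ℝ)..u, f x) (f t) (Icc 1 T) t := by
  haveI : Fact (t ∈ Icc (1:ℝ) T) := ⟨ht⟩
  have hsub : uIcc (1:ℝ) t ⊆ Icc 1 T := by
    rw [uIcc_of_le ht.1]; exact Icc_subset_Icc le_rfl ht.2
  exact intervalIntegral.integral_hasDerivWithinAt_right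
    ((hf.mono hsub).intervalIntegrable)
    ⟨Icc 1 T, self_mem_nhdsWithin, hf.aestronglyMeasurable measurableSet_Icc⟩
    (hf t ht)

lemma ftc1_icc {T : ℝ} {F F' : ℝ → ℝ}
    (hd : ∀ x ∈ Icc (1:ℝ) T, HasDerivWithinAt F (F' x) (Icc 1 T) x)
    (hF' : ContinuousOn F' (Icc 1 T))
    {t : ℝ} (ht : t ∈ Icc (1:ℝ) T) :
    ∫ x in (1:ℝ)..t, F' x = F t - F 1 := by
  have hsub : Icc (1:ℝ) t ⊆ Icc 1 T := Icc_subset_Icc le_rfl ht.2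
  apply integral_eq_sub_of_hasDeriv_right_of_le ht.1
  · exact fun x hx => ((hd x (hsub hx)).continuousWithinAt).mono hsub
  · intro x hx
    have hxI : x ∈ Icc (1:ℝ) T := hsub (Ioo_subset_Icc_self hx)
    have hxT : x < T := lt_of_lt_of_le hx.2 ht.2
    refine (hd x hxI).mono_of_mem_nhdsWithin ?_
    refine Filter.mem_of_superset (Ioc_mem_nhdsGT_of_mem ⟨le_refl x, hxT⟩) ?_
    exact fun z hz => ⟨le_trans hxI.1 (le_of_lt hz.1), hz.2⟩
  · have : ContinuousOn F' (uIcc 1 t) := by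
      rw [uIcc_of_le ht.1]; exact hF'.mono hsub
    exact this.intervalIntegrable

lemma int_rpow_le {t : ℝ} (ht : 1 ≤ t) :
    (0:ℝ) ≤ (∫ τ in (1:ℝ)..t, 4 * τ ^ (-(5/4) : ℝ)) ∧
      (∫ τ in (1:ℝ)..t, 4 * τ ^ (-(5/4) : ℝ)) ≤ 16 := by
  have h0 : (0:ℝ) ∉ uIcc (1:ℝ) t := by
    rw [uIcc_of_le ht]; intro h; exact absurd h.1 (by norm_num)
  rw [intervalIntegral.integral_const_mul, integral_rpow (Or.inr ⟨by norm_num, h0⟩)]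
  have h1 : t ^ (-(5/4) + 1 : ℝ) ≤ 1 :=
    rpow_le_one_of_one_le_of_nonpos ht (by norm_num)
  have h2 : (0:ℝ) < t ^ (-(5/4) + 1 : ℝ) := rpow_pos_of_pos (by linarith) _
  rw [one_rpow]
  have hr : 4 * ((t ^ (-(5/4) + 1 : ℝ) - 1) / (-(5/4) + 1)) = 16 * (1 - t ^ (-(5/4) + 1 : ℝ)) := by
    ring
  rw [hr]
  constructor <;> nlinarith

lemma log_rpow_div_le {τ : ℝ} (hτ : 1 ≤ τ) {r : ℝ} (hr : 3/2 ≤ r) :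
    Real.log τ / τ ^ r ≤ 4 * τ ^ (-(5/4) : ℝ) := by
  have h0 : (0:ℝ) < τ := by linarith
  have hlog : Real.log τ ≤ 4 * τ ^ ((1:ℝ)/4) := by
    have := Real.log_le_rpow_div h0.le (by norm_num : (0:ℝ) < 1/4)
    have h4 : τ ^ ((1:ℝ)/4) / (1/4) = 4 * τ ^ ((1:ℝ)/4) := by ring
    linarith [h4 ▸ this]
  have hrpos : (0:ℝ) < τ ^ r := rpow_pos_of_pos h0 _
  calc Real.log τ / τ ^ r ≤ (4 * τ ^ ((1:ℝ)/4)) / τ ^ r := by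
        gcongr
    _ = 4 * τ ^ ((1:ℝ)/4 - r) := by
        rw [rpow_sub h0]; ring
    _ ≤ 4 * τ ^ (-(5/4) : ℝ) := by
        have := rpow_le_rpow_of_exponent_le hτ (by linarith : (1:ℝ)/4 - r ≤ -(5/4))
        linarith

lemma key_int_bound {t : ℝ} (ht : 1 ≤ t) {f : ℝ → ℝ} {K : ℝ} (hK : 0 ≤ K)
    (hfi : IntervalIntegrable f volume 1 t)
    (hle : ∀ τ ∈ Ioc (1:ℝ) t, |f τ| ≤ K * (4 * τ ^ (-(5/4) : ℝ))) :
    |∫ τ in (1:ℝ)..t, f τ| ≤ 16 * K := by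
  have hgc : ContinuousOn (fun τ : ℝ => K * (4 * τ ^ (-(5/4) : ℝ))) (uIcc 1 t) := by
    apply ContinuousOn.mul continuousOn_const
    apply ContinuousOn.mul continuousOn_const
    apply ContinuousOn.rpow_const continuousOn_id
    intro x hx
    rw [uIcc_of_le ht] at hx
    left
    simp only [id_eq]
    exact ne_of_gt (by linarith [hx.1] : (0:ℝ) < x)
  have hgi : IntervalIntegrable (fun τ : ℝ => K * (4 * τ ^ (-(5/4) : ℝ))) volume 1 t :=
    hgc.intervalIntegrable
  have h := intervalIntegral.norm_integral_le_abs_of_norm_le (f := f)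
      (μ := volume) (a := 1) (b := t)
      (g := fun τ => K * (4 * τ ^ (-(5/4) : ℝ))) ?_ hgi
  · have hval : ∫ τ in (1:ℝ)..t, K * (4 * τ ^ (-(5/4) : ℝ))
        = K * ∫ τ in (1:ℝ)..t, 4 * τ ^ (-(5/4) : ℝ) := by
      rw [intervalIntegral.integral_const_mul]
    obtain ⟨h0, h16⟩ := int_rpow_le ht
    rw [Real.norm_eq_abs] at h
    refine h.trans ?_
    rw [hval, abs_of_nonneg (by positivity)]
    nlinarith
  · rw [MeasureTheory.ae_restrict_iff' measurableSet_uIoc]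
    refine Filter.Eventually.of_forall fun τ hτ => ?_
    rw [uIoc_of_le ht] at hτ
    exact hle τ hτ

lemma key_int_bound_log {t : ℝ} (ht : 1 ≤ t) {f : ℝ → ℝ} {K : ℝ} (hK : 0 ≤ K)
    (hfi : IntervalIntegrable f volume 1 t)
    (hle : ∀ τ ∈ Ioc (1:ℝ) t, |f τ| ≤ K / τ) :
    |∫ τ in (1:ℝ)..t, f τ| ≤ K * Real.log t := by
  have hgc : ContinuousOn (fun τ : ℝ => K * (1 / τ)) (uIcc 1 t) := by
    apply ContinuousOn.mul continuousOn_const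
    apply ContinuousOn.div continuousOn_const continuousOn_id
    intro x hx
    rw [uIcc_of_le ht] at hx
    simp only [id_eq]
    exact ne_of_gt (by linarith [hx.1] : (0:ℝ) < x)
  have hgi : IntervalIntegrable (fun τ : ℝ => K * (1 / τ)) volume 1 t :=
    hgc.intervalIntegrable
  have h := intervalIntegral.norm_integral_le_abs_of_norm_le (f := f)
      (μ := volume) (a := 1) (b := t)
      (g := fun τ => K * (1 / τ)) ?_ hgi
  · have h0 : (0:ℝ) ∉ uIcc (1:ℝ) t := by
      rw [uIcc_of_le ht]; intro h; exact absurd h.1 (by norm_num)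
    have hval : ∫ τ in (1:ℝ)..t, K * (1 / τ) = K * Real.log t := by
      rw [intervalIntegral.integral_const_mul, integral_one_div h0, div_one]
    rw [Real.norm_eq_abs, hval] at h
    refine h.trans ?_
    rw [abs_of_nonneg (mul_nonneg hK (Real.log_nonneg ht))]
  · rw [MeasureTheory.ae_restrict_iff' measurableSet_uIoc]
    refine Filter.Eventually.of_forall fun τ hτ => ?_
    rw [uIoc_of_le ht] at hτ
    have := hle τ hτ
    rw [Real.norm_eq_abs]
    calc |f τ| ≤ K / τ := this
      _ = K * (1/τ) := by ring

end PBOS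

set_option maxHeartbeats 1000000 in
/-- Quantitative stability for the linear boundary ODE system: for
`γ > 1`, `δ ∈ (0, 1/2)` there are `ε₀ > 0` and `C > 0`, depending only on `(γ, δ)`,
such that for every `A`, every `0 < ε ≤ ε₀`, every `T > 1`, and every `C¹` solution
`(y, k)` on `[1, T]` of `y' = -p·y + q·k`, `k' = -((γ+1)/2)·y + s·k` with `y(1) = A`,
`k(1) = 0` and coefficients satisfying `|p(t) - 1/t| ≤ ε·ln t/t²`, `|q(t)| ≤ ε/t^{3-δ}`,
`|s(t)| ≤ ε/t^{2-δ}`, one has `|y(t) - A/t| ≤ Cε|A|/t` and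
`|k(t) + ((γ+1)/2)·A·ln t| ≤ Cε|A|·ln t` on `[1, T]`. -/

theorem perturbed_boundary_ode_stability
    (γ δ : ℝ) (hγ : 1 < γ) (hδ0 : 0 < δ) (hδ : δ < 1 / 2) :
    ∃ ε₀ C : ℝ, 0 < ε₀ ∧ 0 < C ∧
      ∀ (A ε T : ℝ), 0 < ε → ε ≤ ε₀ → 1 < T →
      ∀ p q s y k : ℝ → ℝ,
        ContinuousOn p (Set.Icc 1 T) →
        ContinuousOn q (Set.Icc 1 T) →
        ContinuousOn s (Set.Icc 1 T) →
        (∀ t ∈ Set.Icc (1 : ℝ) T, |p t - 1 / t| ≤ ε * Real.log t / t ^ 2) →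
        (∀ t ∈ Set.Icc (1 : ℝ) T, |q t| ≤ ε / t ^ (3 - δ)) →
        (∀ t ∈ Set.Icc (1 : ℝ) T, |s t| ≤ ε / t ^ (2 - δ)) →
        ContDiffOn ℝ 1 y (Set.Icc 1 T) →
        ContDiffOn ℝ 1 k (Set.Icc 1 T) →
        y 1 = A → k 1 = 0 →
        (∀ t ∈ Set.Icc (1 : ℝ) T,
          HasDerivWithinAt y (-(p t) * y t + q t * k t) (Set.Icc 1 T) t ∧
          HasDerivWithinAt k (-((γ + 1) / 2) * y t + s t * k t) (Set.Icc 1 T) t) →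
        ∀ t ∈ Set.Icc (1 : ℝ) T,
          |y t - A / t| ≤ C * ε * |A| / t ∧
          |k t + ((γ + 1) / 2) * A * Real.log t| ≤ C * ε * |A| * Real.log t := by
  have hc1 : 1 < (γ + 1) / 2 := by linarith
  set c : ℝ := (γ + 1) / 2 with hc_def
  have hc0 : 0 < c := by linarith
  refine ⟨1 / (2592 * c), 8032 * c ^ 2, by positivity, by positivity, ?_⟩
  intro A ε T hε0 hεε₀ hT p q s y k hpc hqc hsc hpb hqb hsb hyC hkC hy1 hk1 hsys
  have hT1 : (1:ℝ) ≤ T := hT.le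
  have hεsmall : 2592 * c * ε ≤ 1 := by
    have h2592 : (0:ℝ) < 2592 * c := by positivity
    calc 2592 * c * ε ≤ 2592 * c * (1 / (2592 * c)) := by gcongr
      _ = 1 := by field_simp
  have h16 : 16 * ε ≤ 1 := by nlinarith
  have h32 : 32 * ε ≤ 1 := by nlinarith
  have h1296 : 1296 * c * ε ≤ 1 / 2 := by nlinarith
  have hyc : ContinuousOn y (Set.Icc 1 T) := hyC.continuousOn
  have hkc : ContinuousOn k (Set.Icc 1 T) := hkC.continuousOn
  -- membership helpers
  have hmemIoc : ∀ {t τ : ℝ}, t ∈ Set.Icc (1:ℝ) T → τ ∈ Set.Ioc (1:ℝ) t → τ ∈ Set.Icc (1:ℝ) T :=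
    fun ht hτ => ⟨hτ.1.le, hτ.2.trans ht.2⟩
  have hpos : ∀ {τ : ℝ}, τ ∈ Set.Icc (1:ℝ) T → (0:ℝ) < τ := fun hτ => lt_of_lt_of_le one_pos hτ.1
  have hInt : ∀ {f : ℝ → ℝ}, ContinuousOn f (Set.Icc 1 T) → ∀ {t : ℝ}, t ∈ Set.Icc (1:ℝ) T →
      IntervalIntegrable f volume 1 t := by
    intro f hf t ht
    apply ContinuousOn.intervalIntegrable
    rw [uIcc_of_le ht.1]
    exact hf.mono (Set.Icc_subset_Icc le_rfl ht.2)
  have hexp3 : ∀ x : ℝ, |x| ≤ 1 → Real.exp x ≤ 3 := by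
    intro x hx
    have h1 : Real.exp x ≤ Real.exp 1 := Real.exp_le_exp.2 ((le_abs_self x).trans hx)
    have := Real.exp_one_lt_d9
    linarith
  -- the integrating factors
  set P : ℝ → ℝ := fun u => ∫ x in (1:ℝ)..u, p x with hP_def
  set S : ℝ → ℝ := fun u => ∫ x in (1:ℝ)..u, s x with hS_def
  have hPd : ∀ x ∈ Set.Icc (1:ℝ) T, HasDerivWithinAt P (p x) (Set.Icc 1 T) x :=
    fun x hx => PBOS.ftc2_icc hpc hx
  have hSd : ∀ x ∈ Set.Icc (1:ℝ) T, HasDerivWithinAt S (s x) (Set.Icc 1 T) x :=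
    fun x hx => PBOS.ftc2_icc hsc hx
  have hPc : ContinuousOn P (Set.Icc 1 T) := fun x hx => (hPd x hx).continuousWithinAt
  have hSc : ContinuousOn S (Set.Icc 1 T) := fun x hx => (hSd x hx).continuousWithinAt
  -- bound on S
  have hSb : ∀ t ∈ Set.Icc (1:ℝ) T, |S t| ≤ 16 * ε := by
    intro t ht
    have := PBOS.key_int_bound ht.1 hε0.le (hInt hsc ht) (f := s) (K := ε) ?_
    · linarith
    intro τ hτ
    have hτI := hmemIoc ht hτ
    have hτ1 : (1:ℝ) ≤ τ := hτ.1.le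
    have hτ0 : (0:ℝ) < τ := by linarith
    calc |s τ| ≤ ε / τ ^ (2 - δ) := hsb τ hτI
      _ = ε * τ ^ (-(2 - δ)) := by
          rw [Real.rpow_neg hτ0.le]; ring
      _ ≤ ε * (4 * τ ^ (-(5/4) : ℝ)) := by
          have h1 : τ ^ (-(2 - δ)) ≤ τ ^ (-(5/4) : ℝ) :=
            Real.rpow_le_rpow_of_exponent_le hτ1 (by linarith)
          have h2 : (0:ℝ) ≤ τ ^ (-(5/4) : ℝ) := (Real.rpow_pos_of_pos hτ0 _).le
          nlinarith
  -- bound on P - log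
  have hwb : ∀ t ∈ Set.Icc (1:ℝ) T, |P t - Real.log t| ≤ 16 * ε := by
    intro t ht
    have hinvc : ContinuousOn (fun x : ℝ => 1 / x) (Set.Icc 1 T) := by
      apply ContinuousOn.div continuousOn_const continuousOn_id
      intro x hx
      simp only [id_eq]
      exact ne_of_gt (hpos hx)
    have h0uIcc : (0:ℝ) ∉ uIcc (1:ℝ) t := by
      rw [uIcc_of_le ht.1]; intro h; exact absurd h.1 (by norm_num)
    have hsplit : P t - Real.log t = ∫ x in (1:ℝ)..t, (p x - 1 / x) := by
      rw [intervalIntegral.integral_sub (hInt hpc ht) (hInt hinvc ht)]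
      rw [integral_one_div h0uIcc, div_one]
    rw [hsplit]
    apply PBOS.key_int_bound ht.1 hε0.le
      (IntervalIntegrable.sub (hInt hpc ht) (hInt hinvc ht))
    intro τ hτ
    have hτI := hmemIoc ht hτ
    have hτ1 : (1:ℝ) ≤ τ := hτ.1.le
    have hτ0 : (0:ℝ) < τ := by linarith
    have hlr : Real.log τ / τ ^ (2:ℕ) ≤ 4 * τ ^ (-(5/4) : ℝ) := by
      have h := PBOS.log_rpow_div_le hτ1 (r := 2) (by norm_num)
      rwa [show ((2:ℝ)) = ((2:ℕ):ℝ) by norm_num, Real.rpow_natCast] at h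
    calc |p τ - 1 / τ| ≤ ε * Real.log τ / τ ^ 2 := hpb τ hτI
      _ ≤ ε * (4 * τ ^ (-(5/4) : ℝ)) := by
          have h2 : (0:ℝ) ≤ ε := hε0.le
          have h3 : ε * Real.log τ / τ ^ 2 = ε * (Real.log τ / τ ^ (2:ℕ)) := by ring
          rw [h3]
          nlinarith
  -- Identity A
  have idA : ∀ t ∈ Set.Icc (1:ℝ) T,
      Real.exp (P t) * y t = A + ∫ τ in (1:ℝ)..t, Real.exp (P τ) * (q τ * k τ) := by
    intro t ht
    have hF'c : ContinuousOn (fun τ => Real.exp (P τ) * (q τ * k τ)) (Set.Icc 1 T) :=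
      (Real.continuous_exp.comp_continuousOn hPc).mul (hqc.mul hkc)
    have hd : ∀ x ∈ Set.Icc (1:ℝ) T,
        HasDerivWithinAt (fun u => Real.exp (P u) * y u)
          (Real.exp (P x) * (q x * k x)) (Set.Icc 1 T) x := by
      intro x hx
      have h1 := ((hPd x hx).exp.mul (hsys x hx).1)
      exact h1.congr_deriv (by ring)
    have := PBOS.ftc1_icc hd hF'c ht
    have hP1 : P 1 = 0 := intervalIntegral.integral_same
    rw [this, hP1, Real.exp_zero, one_mul, hy1]
    ring
  -- Identity B
  have idB : ∀ t ∈ Set.Icc (1:ℝ) T,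
      Real.exp (-S t) * k t = ∫ τ in (1:ℝ)..t, -c * (Real.exp (-S τ) * y τ) := by
    intro t ht
    have hF'c : ContinuousOn (fun τ => -c * (Real.exp (-S τ) * y τ)) (Set.Icc 1 T) := by
      apply ContinuousOn.mul continuousOn_const
      exact (Real.continuous_exp.comp_continuousOn hSc.neg).mul hyc
    have hd : ∀ x ∈ Set.Icc (1:ℝ) T,
        HasDerivWithinAt (fun u => Real.exp (-S u) * k u)
          (-c * (Real.exp (-S x) * y x)) (Set.Icc 1 T) x := by
      intro x hx
      have h1 := ((hSd x hx).neg.exp.mul (hsys x hx).2)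
      exact h1.congr_deriv (by simp only [Pi.neg_apply]; ring)
    have := PBOS.ftc1_icc hd hF'c ht
    have hS1 : S 1 = 0 := intervalIntegral.integral_same
    rw [this, hS1, neg_zero, Real.exp_zero, one_mul, hk1]
    ring
  -- the sup of |t y t - A|
  have hne : (Set.Icc (1:ℝ) T).Nonempty := ⟨1, Set.left_mem_Icc.2 hT1⟩
  have he1c : ContinuousOn (fun t => |t * y t - A|) (Set.Icc 1 T) :=
    ((continuousOn_id.mul hyc).sub continuousOn_const).abs
  set N : ℝ := sSup ((fun t => |t * y t - A|) '' Set.Icc 1 T) with hN_def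
  have hbdd : BddAbove ((fun t => |t * y t - A|) '' Set.Icc 1 T) :=
    (isCompact_Icc.image_of_continuousOn he1c).bddAbove
  have hNle : ∀ τ ∈ Set.Icc (1:ℝ) T, |τ * y τ - A| ≤ N :=
    fun τ hτ => le_csSup hbdd ⟨τ, hτ, rfl⟩
  have hN0 : 0 ≤ N := by
    have := hNle 1 (Set.left_mem_Icc.2 hT1)
    have h1 : |1 * y 1 - A| = 0 := by rw [hy1]; simp
    linarith [abs_nonneg ((1:ℝ) * y 1 - A), this, h1.symm.le]
  have hAN0 : 0 ≤ |A| + N := by positivity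
  -- pointwise bound on |y|
  have hyabs : ∀ σ ∈ Set.Icc (1:ℝ) T, |y σ| ≤ (|A| + N) / σ := by
    intro σ hσ
    have hσ0 : (0:ℝ) < σ := hpos hσ
    rw [le_div_iff₀ hσ0]
    have h1 : |σ * y σ| ≤ N + |A| := by
      calc |σ * y σ| = |(σ * y σ - A) + A| := by ring_nf
        _ ≤ |σ * y σ - A| + |A| := abs_add_le _ _
        _ ≤ N + |A| := by linarith [hNle σ hσ]
    calc |y σ| * σ = |σ * y σ| := by
          rw [abs_mul, abs_of_pos hσ0]; ring
      _ ≤ N + |A| := h1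
      _ = |A| + N := by ring
  -- bound on |k|
  have hkb : ∀ τ ∈ Set.Icc (1:ℝ) T, |k τ| ≤ 9 * c * (|A| + N) * Real.log τ := by
    intro τ hτ
    have hτ0 : (0:ℝ) < τ := hpos hτ
    have hintc : ContinuousOn (fun σ => -c * (Real.exp (-S σ) * y σ)) (Set.Icc 1 T) := by
      apply ContinuousOn.mul continuousOn_const
      exact (Real.continuous_exp.comp_continuousOn hSc.neg).mul hyc
    have hJ : |∫ σ in (1:ℝ)..τ, -c * (Real.exp (-S σ) * y σ)|
        ≤ 3 * c * (|A| + N) * Real.log τ := by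
      apply PBOS.key_int_bound_log hτ.1 (by positivity) (hInt hintc hτ)
      intro σ hσ
      have hσI := hmemIoc hτ hσ
      have hσ0 : (0:ℝ) < σ := hpos hσI
      have hexp : Real.exp (-S σ) ≤ 3 := by
        apply hexp3
        rw [abs_neg]
        linarith [hSb σ hσI]
      have hy' := hyabs σ hσI
      have hexp0 : (0:ℝ) ≤ Real.exp (-S σ) := (Real.exp_pos _).le
      calc |(-c) * (Real.exp (-S σ) * y σ)| = c * (Real.exp (-S σ) * |y σ|) := by
            rw [abs_mul, abs_mul, abs_neg, abs_of_pos hc0,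
              abs_of_nonneg hexp0]
        _ ≤ c * (3 * ((|A| + N) / σ)) := by
            have hyn : (0:ℝ) ≤ |y σ| := abs_nonneg _
            have hstep : Real.exp (-S σ) * |y σ| ≤ 3 * ((|A| + N) / σ) :=
              mul_le_mul hexp hy' hyn (by norm_num)
            exact mul_le_mul_of_nonneg_left hstep hc0.le
        _ = 3 * c * (|A| + N) / σ := by ring
    have hkeq : |k τ| = Real.exp (S τ) * |Real.exp (-S τ) * k τ| := by
      rw [abs_mul, abs_of_pos (Real.exp_pos _), ← mul_assoc, ← Real.exp_add]
      simp
    rw [hkeq, idB τ hτ]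
    have hexpS : Real.exp (S τ) ≤ 3 := hexp3 _ (by linarith [hSb τ hτ])
    have hlogτ : (0:ℝ) ≤ Real.log τ := Real.log_nonneg hτ.1
    have habs0 : (0:ℝ) ≤ |∫ σ in (1:ℝ)..τ, -c * (Real.exp (-S σ) * y σ)| := abs_nonneg _
    have hexpS0 : (0:ℝ) < Real.exp (S τ) := Real.exp_pos _
    nlinarith
  -- main estimate on |t y t - A|
  have hkey : ∀ t ∈ Set.Icc (1:ℝ) T,
      |t * y t - A| ≤ 32 * ε * |A| + 1296 * c * ε * (|A| + N) := by
    intro t ht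
    have ht0 : (0:ℝ) < t := hpos ht
    have hJc : ContinuousOn (fun τ => Real.exp (P τ) * (q τ * k τ)) (Set.Icc 1 T) :=
      (Real.continuous_exp.comp_continuousOn hPc).mul (hqc.mul hkc)
    set J : ℝ := ∫ τ in (1:ℝ)..t, Real.exp (P τ) * (q τ * k τ) with hJ_def
    have hJb : |J| ≤ 16 * (27 * c * ε * (|A| + N)) := by
      apply PBOS.key_int_bound ht.1 (by positivity) (hInt hJc ht)
      intro τ hτ
      have hτI := hmemIoc ht hτ
      have hτ1 : (1:ℝ) ≤ τ := hτ.1.le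
      have hτ0 : (0:ℝ) < τ := by linarith
      have hPτ : Real.exp (P τ) ≤ 3 * τ := by
        have h1 : Real.exp (P τ) = Real.exp (P τ - Real.log τ) * τ := by
          conv_lhs => rw [show P τ = (P τ - Real.log τ) + Real.log τ by ring]
          rw [Real.exp_add, Real.exp_log hτ0]
        have h2 : Real.exp (P τ - Real.log τ) ≤ 3 := hexp3 _ (by linarith [hwb τ hτI])
        rw [h1]
        nlinarith [Real.exp_pos (P τ - Real.log τ)]
      have hkτ := hkb τ hτI
      have hqτ := hqb τ hτI
      have hlogτ : (0:ℝ) ≤ Real.log τ := Real.log_nonneg hτ1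
      have hrw : τ / τ ^ (3 - δ) = (τ ^ (2 - δ))⁻¹ := by
        rw [show (3 - δ : ℝ) = (2 - δ) + 1 by ring, Real.rpow_add hτ0, Real.rpow_one]
        rw [div_eq_mul_inv, mul_inv]
        rw [← mul_assoc, mul_comm τ ((τ ^ (2 - δ:ℝ))⁻¹), mul_assoc,
          mul_inv_cancel₀ (ne_of_gt hτ0), mul_one]
      have hchain : |Real.exp (P τ) * (q τ * k τ)|
          ≤ 27 * c * ε * (|A| + N) * (Real.log τ / τ ^ (2 - δ)) := by
        rw [abs_mul, abs_mul, abs_of_pos (Real.exp_pos _)]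
        calc Real.exp (P τ) * (|q τ| * |k τ|)
            ≤ (3 * τ) * ((ε / τ ^ (3 - δ)) * (9 * c * (|A| + N) * Real.log τ)) := by
              apply mul_le_mul hPτ _ (by positivity) (by positivity)
              apply mul_le_mul hqτ hkτ (abs_nonneg _) (by positivity)
          _ = 27 * c * ε * (|A| + N) * (Real.log τ * (τ / τ ^ (3 - δ))) := by ring
          _ = 27 * c * ε * (|A| + N) * (Real.log τ / τ ^ (2 - δ)) := by
              rw [hrw, div_eq_mul_inv]
      refine hchain.trans ?_
      have hlog2 : Real.log τ / τ ^ (2 - δ) ≤ 4 * τ ^ (-(5/4) : ℝ) :=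
        PBOS.log_rpow_div_le hτ1 (by linarith)
      have h27 : (0:ℝ) ≤ 27 * c * ε * (|A| + N) := by positivity
      exact mul_le_mul_of_nonneg_left hlog2 h27
    -- rewrite t y t - A using identity A
    have hE : Real.exp (Real.log t - P t) = t * Real.exp (-(P t)) := by
      rw [Real.exp_sub, Real.exp_log ht0, Real.exp_neg, div_eq_mul_inv]
    have hyt : t * y t - A
        = (Real.exp (Real.log t - P t) - 1) * A + Real.exp (Real.log t - P t) * J := by
      have hA := idA t ht
      have hy' : y t = Real.exp (-(P t)) * (A + J) := by
        have h2 : Real.exp (-(P t)) * (Real.exp (P t) * y t) = y t := by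
          rw [← mul_assoc, ← Real.exp_add]
          simp
        rw [← h2, hA]
      rw [hy', hE]
      ring
    rw [hyt]
    have hwt : |Real.log t - P t| ≤ 16 * ε := by
      rw [abs_sub_comm]; exact hwb t ht
    have hE3 : Real.exp (Real.log t - P t) ≤ 3 := hexp3 _ (by linarith)
    have hE1 : |Real.exp (Real.log t - P t) - 1| ≤ 32 * ε := by
      have := Real.abs_exp_sub_one_le (x := Real.log t - P t) (by linarith)
      linarith
    calc |(Real.exp (Real.log t - P t) - 1) * A + Real.exp (Real.log t - P t) * J|
        ≤ |Real.exp (Real.log t - P t) - 1| * |A| + Real.exp (Real.log t - P t) * |J| := by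
          refine (abs_add_le _ _).trans ?_
          rw [abs_mul, abs_mul, abs_of_pos (Real.exp_pos _)]
      _ ≤ 32 * ε * |A| + 3 * (16 * (27 * c * ε * (|A| + N))) := by
          have h1 : |Real.exp (Real.log t - P t) - 1| * |A| ≤ 32 * ε * |A| :=
            mul_le_mul_of_nonneg_right hE1 (abs_nonneg _)
          have h2 : Real.exp (Real.log t - P t) * |J| ≤ 3 * (16 * (27 * c * ε * (|A| + N))) :=
            mul_le_mul hE3 hJb (abs_nonneg _) (by norm_num)
          linarith
      _ = 32 * ε * |A| + 1296 * c * ε * (|A| + N) := by ring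
  -- bound on N
  have hNb : N ≤ 2656 * c * ε * |A| := by
    have h1 : N ≤ 32 * ε * |A| + 1296 * c * ε * (|A| + N) := by
      apply csSup_le (hne.image _)
      rintro x ⟨τ, hτ, rfl⟩
      exact hkey τ hτ
    nlinarith [mul_le_mul_of_nonneg_right h1296 hN0,
      mul_nonneg (mul_nonneg (by linarith : (0:ℝ) ≤ c - 1) hε0.le) (abs_nonneg A)]
  -- conclusions
  intro t ht
  have ht0 : (0:ℝ) < t := hpos ht
  have hbd1 : |t * y t - A| ≤ 8032 * c ^ 2 * ε * |A| := by
    have h1 := hNle t ht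
    have h2 : 2656 * c * ε * |A| ≤ 8032 * c ^ 2 * ε * |A| := by
      nlinarith [mul_nonneg hε0.le (abs_nonneg A), hc1, sq_nonneg c]
    linarith
  constructor
  · have h1 : y t - A / t = (t * y t - A) / t := by
      field_simp
    rw [h1, abs_div, abs_of_pos ht0]
    gcongr
  · have hlogt0 : (0:ℝ) ≤ Real.log t := Real.log_nonneg ht.1
    have hyintc : ContinuousOn (fun σ => Real.exp (-S σ) * y σ) (Set.Icc 1 T) :=
      (Real.continuous_exp.comp_continuousOn hSc.neg).mul hyc
    have h0uIcc : (0:ℝ) ∉ uIcc (1:ℝ) t := by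
      rw [uIcc_of_le ht.1]; intro h; exact absurd h.1 (by norm_num)
    have hinvC : ContinuousOn (fun σ : ℝ => 1 / σ) (Set.Icc 1 T) := by
      apply ContinuousOn.div continuousOn_const continuousOn_id
      intro x hx; simp only [id_eq]; exact ne_of_gt (hpos hx)
    have hfc : ContinuousOn (fun σ => -c * (Real.exp (S t - S σ) * y σ - A / σ))
        (Set.Icc 1 T) := by
      apply ContinuousOn.mul continuousOn_const
      apply ContinuousOn.sub
      · exact (Real.continuous_exp.comp_continuousOn (continuousOn_const.sub hSc)).mul hyc
      · apply ContinuousOn.div continuousOn_const continuousOn_id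
        intro x hx; simp only [id_eq]; exact ne_of_gt (hpos hx)
    have hid : (∫ σ in (1:ℝ)..t, -c * (Real.exp (S t - S σ) * y σ - A / σ))
        = k t + c * A * Real.log t := by
      set Y : ℝ := ∫ σ in (1:ℝ)..t, Real.exp (-S σ) * y σ with hY_def
      have hY : Real.exp (-S t) * k t = -c * Y := by
        rw [idB t ht, hY_def, ← intervalIntegral.integral_const_mul]
      have hk : k t = Real.exp (S t) * (-c * Y) := by
        rw [← hY, ← mul_assoc, ← Real.exp_add]
        simp
      have e1 : Set.EqOn (fun σ => -c * (Real.exp (S t - S σ) * y σ - A / σ))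
          (fun σ => (-c * Real.exp (S t)) * (Real.exp (-S σ) * y σ) + (c * A) * (1 / σ))
          (Set.uIcc (1:ℝ) t) := by
        intro σ _
        simp only
        rw [Real.exp_sub, Real.exp_neg]
        ring
      have hi1 : IntervalIntegrable
          (fun σ => (-c * Real.exp (S t)) * (Real.exp (-S σ) * y σ)) volume 1 t :=
        hInt (continuousOn_const.mul hyintc) ht
      have hi2 : IntervalIntegrable (fun σ : ℝ => (c * A) * (1 / σ)) volume 1 t :=
        hInt (continuousOn_const.mul hinvC) ht
      calc (∫ σ in (1:ℝ)..t, -c * (Real.exp (S t - S σ) * y σ - A / σ))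
          = ∫ σ in (1:ℝ)..t,
              ((-c * Real.exp (S t)) * (Real.exp (-S σ) * y σ) + (c * A) * (1 / σ)) :=
            intervalIntegral.integral_congr e1
        _ = (∫ σ in (1:ℝ)..t, (-c * Real.exp (S t)) * (Real.exp (-S σ) * y σ))
            + ∫ σ in (1:ℝ)..t, (c * A) * (1 / σ) := intervalIntegral.integral_add hi1 hi2
        _ = (-c * Real.exp (S t)) * Y + (c * A) * ∫ σ in (1:ℝ)..t, (1 / σ) := by
            rw [intervalIntegral.integral_const_mul, intervalIntegral.integral_const_mul, hY_def]
        _ = (-c * Real.exp (S t)) * Y + (c * A) * Real.log t := by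
            rw [integral_one_div h0uIcc, div_one]
        _ = k t + c * A * Real.log t := by
            rw [hk]
            ring
    rw [← hid]
    have hK : |∫ σ in (1:ℝ)..t, -c * (Real.exp (S t - S σ) * y σ - A / σ)|
        ≤ (c * (3 * (2656 * c * ε * |A|) + 64 * ε * |A|)) * Real.log t := by
      apply PBOS.key_int_bound_log ht.1 (by positivity) (hInt hfc ht)
      intro σ hσ
      have hσI := hmemIoc ht hσ
      have hσ0 : (0:ℝ) < σ := hpos hσI
      have hΔ : |S t - S σ| ≤ 32 * ε := by
        have h1 := hSb t ht
        have h2 := hSb σ hσI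
        have h3 := abs_add_le (S t) (-(S σ))
        rw [abs_neg] at h3
        have h4 : S t - S σ = S t + -(S σ) := by ring
        rw [h4]
        linarith
      have hexpΔ : Real.exp (S t - S σ) ≤ 3 := hexp3 _ (by linarith)
      have hexpΔ1 : |Real.exp (S t - S σ) - 1| ≤ 64 * ε := by
        have := Real.abs_exp_sub_one_le (x := S t - S σ) (by linarith)
        linarith
      have hyd : |y σ - A / σ| ≤ 2656 * c * ε * |A| / σ := by
        have h1 : y σ - A / σ = (σ * y σ - A) / σ := by
          field_simp
        rw [h1, abs_div, abs_of_pos hσ0]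
        gcongr
        exact (hNle σ hσI).trans hNb
      have hrearr : Real.exp (S t - S σ) * y σ - A / σ
          = Real.exp (S t - S σ) * (y σ - A / σ) + (Real.exp (S t - S σ) - 1) * (A / σ) := by
        ring
      calc |(-c) * (Real.exp (S t - S σ) * y σ - A / σ)|
          = c * |Real.exp (S t - S σ) * y σ - A / σ| := by
            rw [abs_mul, abs_neg, abs_of_pos hc0]
        _ ≤ c * (3 * (2656 * c * ε * |A| / σ) + 64 * ε * (|A| / σ)) := by
            apply mul_le_mul_of_nonneg_left _ hc0.le
            rw [hrearr]
            refine (abs_add_le _ _).trans ?_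
            have t1 : |Real.exp (S t - S σ) * (y σ - A / σ)|
                ≤ 3 * (2656 * c * ε * |A| / σ) := by
              rw [abs_mul, abs_of_pos (Real.exp_pos _)]
              exact mul_le_mul hexpΔ hyd (abs_nonneg _) (by norm_num)
            have t2 : |(Real.exp (S t - S σ) - 1) * (A / σ)| ≤ 64 * ε * (|A| / σ) := by
              rw [abs_mul, abs_div, abs_of_pos hσ0]
              exact mul_le_mul_of_nonneg_right hexpΔ1 (by positivity)
            linarith
        _ = (c * (3 * (2656 * c * ε * |A|) + 64 * ε * |A|)) / σ := by
            field_simp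
    refine hK.trans ?_
    have hfin : c * (3 * (2656 * c * ε * |A|) + 64 * ε * |A|) ≤ 8032 * c ^ 2 * ε * |A| := by
      nlinarith [mul_nonneg hε0.le (abs_nonneg A),
        mul_nonneg (mul_nonneg (by nlinarith : (0:ℝ) ≤ c ^ 2 - c) hε0.le) (abs_nonneg A)]
    exact mul_le_mul_of_nonneg_right hfin hlogt0
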